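/- Let R be a left head variable free ATRS. If s →_R t then s↓_U →⁺_{R_η↓ ∪ U(R)} t↓_U, i.e., a single R-step between applicative terms can be simulated by at least one step of the uncurried system on the U-normal forms. -/

import Mathlib

/-- First-order terms over a signature `F` with arity function `ar` and variables `V`. -/
inductive Term (F : Type) (ar : F → ℕ) (V : Type) : Type where
  | var : V → Term F ar V
  | app : (f : F) → (Fin (ar f) → Term F ar V) → Term F ar V

namespace Term

variable {F V : Type} {ar : F → ℕ}

/-- Application of a substitution. -/
def subst (σ : V → Term F ar V) : Term F ar V → Term F ar V
  | .var x => σ x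
  | .app f ts => .app f (fun i => (ts i).subst σ)

/-- Size of a term. -/
def size : Term F ar V → ℕ
  | .var _ => 1
  | .app _ ts => 1 + ∑ i, (ts i).size

end Term

section Rewriting

variable {F V : Type} {ar : F → ℕ}

/-- The (reflexive) subterm relation: `Subterm u t` means `u` occurs in `t`. -/
inductive Subterm : Term F ar V → Term F ar V → Prop where
  | refl (t) : Subterm t t
  | app (f) (ts : Fin (ar f) → Term F ar V) (i) (u) :
      Subterm u (ts i) → Subterm u (.app f ts)

/-- Proper subterm: `PSub u t` means `u` is a proper subterm of `t`. -/
def PSub (u t : Term F ar V) : Prop :=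
  ∃ (f : F) (ts : Fin (ar f) → Term F ar V) (i : Fin (ar f)),
    t = Term.app f ts ∧ Subterm u (ts i)

/-- One-step rewrite relation of a TRS `R`: closure of the rules under
contexts and substitutions. -/
inductive Rew (R : Set (Term F ar V × Term F ar V)) : Term F ar V → Term F ar V → Prop where
  | rule (l r : Term F ar V) (σ : V → Term F ar V) :
      (l, r) ∈ R → Rew R (l.subst σ) (r.subst σ)
  | congr (f : F) (ts : Fin (ar f) → Term F ar V) (i : Fin (ar f)) (u : Term F ar V) :
      Rew R (ts i) u → Rew R (.app f ts) (.app f (Function.update ts i u))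

/-- Many-step rewriting. -/
def RStar (R : Set (Term F ar V × Term F ar V)) : Term F ar V → Term F ar V → Prop :=
  Relation.ReflTransGen (Rew R)

/-- Normal forms. -/
def NF (R : Set (Term F ar V × Term F ar V)) (t : Term F ar V) : Prop := ∀ u, ¬ Rew R t u

/-- `t` rewrites to the normal form `u` (w.r.t. `R`). -/
def NormTo (R : Set (Term F ar V × Term F ar V)) (t u : Term F ar V) : Prop :=
  RStar R t u ∧ NF R u

/-- Termination: the rewrite relation is well-founded. -/
def Terminating (R : Set (Term F ar V × Term F ar V)) : Prop :=
  WellFounded (fun t s => Rew R s t)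

/-- Confluence. -/
def Confluent (R : Set (Term F ar V × Term F ar V)) : Prop :=
  ∀ s t u, RStar R s t → RStar R s u → ∃ v, RStar R t v ∧ RStar R u v

/-- Innermost one-step rewriting: the contracted redex has only normal
proper subterms. -/
inductive IRew (R : Set (Term F ar V × Term F ar V)) : Term F ar V → Term F ar V → Prop where
  | rule (l r : Term F ar V) (σ : V → Term F ar V) :
      (l, r) ∈ R → (∀ u, PSub u (l.subst σ) → NF R u) →
      IRew R (l.subst σ) (r.subst σ)
  | congr (f : F) (ts : Fin (ar f) → Term F ar V) (i : Fin (ar f)) (u : Term F ar V) :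
      IRew R (ts i) u → IRew R (.app f ts) (.app f (Function.update ts i u))

/-- Innermost termination. -/
def ITerminating (R : Set (Term F ar V × Term F ar V)) : Prop :=
  WellFounded (fun t s => IRew R s t)

/-- `m`-fold composition of a relation. -/
def RelPow (r : α → α → Prop) : ℕ → α → α → Prop
  | 0 => Eq
  | n + 1 => fun a c => ∃ b, r a b ∧ RelPow r n b c

/-- Derivation height of `t` w.r.t. a relation. -/
noncomputable def dh (r : α → α → Prop) (t : α) : ℕ :=
  sSup { m | ∃ u, RelPow r m t u }

/-- Derivational complexity w.r.t. a relation, restricted to starting terms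
satisfying `P`. -/
noncomputable def dcOn {F V : Type} {ar : F → ℕ}
    (r : Term F ar V → Term F ar V → Prop) (P : Term F ar V → Prop) (n : ℕ) : ℕ :=
  sSup { m | ∃ t, P t ∧ t.size ≤ n ∧ m = dh r t }

/-- `f ∈ O(g)`. -/
def BigO (f g : ℕ → ℕ) : Prop := ∃ M N : ℕ, ∀ n, f n ≤ M * g n + N

end Rewriting
section ATRS

/-- Signature for (un)curried applicative systems: `none` is the binary
application symbol `∘`, and `some (c, i)` is the symbol `c_i` of arity `i`
(with `c_0 = c` an applicative constant). -/
abbrev USig (C : Type) := Option (C × ℕ)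

/-- Arity function for `USig`. -/
def uar {C : Type} : USig C → ℕ
  | none => 2
  | some (_, i) => i

/-- Terms over the signature `USig C` (variables are natural numbers). -/
abbrev ATerm (C : Type) := Term (USig C) uar ℕ

variable {C : Type}

/-- Binary application `s ∘ t`. -/
def appT (s t : ATerm C) : ATerm C :=
  .app none (fun i => if i.1 = 0 then s else t)

/-- The applicative constant `c` (i.e. `c_0`). -/
def constT (c : C) : ATerm C :=
  .app (some (c, 0)) (fun i => (Nat.not_lt_zero _ i.isLt).elim)

/-- Symbols of a purely applicative term: only `∘` and constants `c_0`. -/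
def ApplicativeSym : USig C → Prop
  | none => True
  | some (_, i) => i = 0

/-- A term over the applicative signature (constants plus `∘`). -/
def ApplicativeT (t : ATerm C) : Prop :=
  ∀ (u : ATerm C) (f : USig C) (ts : Fin (uar f) → ATerm C),
    Subterm u t → u = Term.app f ts → ApplicativeSym f

/-- `headCount t = some (c, n)` iff `t = c ∘ t₁ ∘ ⋯ ∘ tₙ` for some terms `tᵢ`. -/
def headCount : ATerm C → Option (C × ℕ)
  | .var _ => none
  | .app none ts => (headCount (ts ⟨0, by simp [uar]⟩)).map (fun p => (p.1, p.2 + 1))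
  | .app (some (_, _ + 1)) _ => none
  | .app (some (c, 0)) _ => some (c, 0)

/-- The spine `c ∘ t₁ ∘ ⋯ ∘ tₙ` occurs as a subterm of a left- or
right-hand side of `R`. -/
def SpineIn (R : Set (ATerm C × ATerm C)) (c : C) (n : ℕ) : Prop :=
  ∃ p ∈ R, ∃ t : ATerm C, (Subterm t p.1 ∨ Subterm t p.2) ∧ headCount t = some (c, n)

/-- `aa` is the applicative-arity function of `R`: `aa c` is the maximal `n`
such that `c ∘ t₁ ∘ ⋯ ∘ tₙ` occurs in a rule of `R` (and `0` if `c` does not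
occur applied). -/
def AASpec (R : Set (ATerm C × ATerm C)) (aa : C → ℕ) : Prop :=
  ∀ c : C, (∀ n, SpineIn R c n → n ≤ aa c) ∧ (aa c = 0 ∨ SpineIn R c (aa c))

/-- A term is head variable free if no subterm is of the form `x ∘ v` with
`x` a variable. -/
def HeadVarFree (t : ATerm C) : Prop :=
  ∀ u : ATerm C, Subterm u t → ∀ (x : ℕ) (v : ATerm C), u ≠ appT (.var x) v

/-- Basic well-formedness of an applicative TRS: left-hand sides are not
variables, right-hand side variables occur on the left, and both sides are
applicative terms. -/
def IsATRS (R : Set (ATerm C × ATerm C)) : Prop :=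
  ∀ p ∈ R, (∀ x : ℕ, p.1 ≠ Term.var x) ∧
    (∀ x : ℕ, Subterm (.var x) p.2 → Subterm (.var x) p.1) ∧
    ApplicativeT p.1 ∧ ApplicativeT p.2

/-- `R` is left head variable free. -/
def LHVF (R : Set (ATerm C × ATerm C)) : Prop := ∀ p ∈ R, HeadVarFree p.1

/-- The variables `x_0, …, x_{i-1}`. -/
def uvars (i : ℕ) : Fin i → ATerm C := fun j => .var j.1

/-- The term `f_i(x_0,…,x_{i-1})`. -/
def fiT (c : C) (i : ℕ) : ATerm C := .app (some (c, i)) (fun j => .var j.1)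

/-- The uncurrying system `U`, with rules
`c_i(x_1,…,x_i) ∘ y → c_{i+1}(x_1,…,x_i,y)` for all `0 ≤ i < aa c`. -/
def USys (aa : C → ℕ) : Set (ATerm C × ATerm C) :=
  { p | ∃ (c : C) (i : ℕ), i < aa c ∧
      p = (appT (fiT c i) (.var i), fiT c (i + 1)) }

/-- The currying system `C(F)` (for a signature with arities `arF`), with
rules `f_{i+1}(x_1,…,x_i,y) → f_i(x_1,…,x_i) ∘ y` for all `0 ≤ i < arF f`
(where `f_{arF f}` plays the role of `f`). -/
def CurrySys {F : Type} (arF : F → ℕ) : Set (ATerm F × ATerm F) :=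
  { p | ∃ (f : F) (i : ℕ), i < arF f ∧
      p = (fiT f (i + 1), appT (fiT f i) (.var i)) }

/-- The η-saturation `R_η` of `R` (w.r.t. applicative arities `aa`). -/
inductive Eta (aa : C → ℕ) (R : Set (ATerm C × ATerm C)) : ATerm C × ATerm C → Prop where
  | base (p) : p ∈ R → Eta aa R p
  | eta (l r : ATerm C) (c : C) (n x : ℕ) :
      Eta aa R (l, r) → headCount l = some (c, n) → n < aa c →
      ¬ Subterm (.var x) l → ¬ Subterm (.var x) r →
      Eta aa R (appT l (.var x), appT r (.var x))

/-- The uncurried system `R_η↓`: the rules of `R_η` with both sides in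
`U`-normal form. -/
def EtaDown (aa : C → ℕ) (R : Set (ATerm C × ATerm C)) : Set (ATerm C × ATerm C) :=
  { p | ∃ l r : ATerm C, Eta aa R (l, r) ∧
      NormTo (USys aa) l p.1 ∧ NormTo (USys aa) r p.2 }

/-- The transformed system `U↓(R) = R_η↓ ∪ U(R)`. -/
def UD (aa : C → ℕ) (R : Set (ATerm C × ATerm C)) : Set (ATerm C × ATerm C) :=
  EtaDown aa R ∪ USys aa

/-- Symbols of the signature of `U↓(R)`: `∘` and `c_i` with `i ≤ aa c`. -/
def GoodSym (aa : C → ℕ) : USig C → Prop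
  | none => True
  | some (c, i) => i ≤ aa c

/-- A term over the signature of `U↓(R)`. -/
def GoodTerm (aa : C → ℕ) (t : ATerm C) : Prop :=
  ∀ (u : ATerm C) (f : USig C) (ts : Fin (uar f) → ATerm C),
    Subterm u t → u = Term.app f ts → GoodSym aa f

/-- `C'`: curry a term over the signature of `U↓(R)` and identify all
symbols `c_i` originating from the same constant `c`. -/
def curryId : ATerm C → ATerm C
  | .var x => .var x
  | .app none ts => appT (curryId (ts ⟨0, by simp [uar]⟩)) (curryId (ts ⟨1, by simp [uar]⟩))
  | .app (some (c, i)) ts =>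
      (List.ofFn (fun j : Fin (uar (some (c, i))) => curryId (ts j))).foldl appT (constT c)

end ATRS

namespace UncurrySim

variable {C : Type}

/-- extend a `Fin i`-tuple by one element. -/
def ext {i : ℕ} (us : Fin i → ATerm C) (b : ATerm C) : Fin (i+1) → ATerm C :=
  fun j => if h : (j : ℕ) < i then us ⟨j, h⟩ else b

/-- smart application: absorb one argument into an uncurried head if possible. -/
def mkApp (aa : C → ℕ) : ATerm C → ATerm C → ATerm C
  | .app (some (c, i)) us, b =>
      if i < aa c then .app (some (c, i+1)) (ext us b)
      else appT (.app (some (c, i)) us) b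
  | a, b => appT a b

/-- `U`-normal form. -/
def down (aa : C → ℕ) : ATerm C → ATerm C
  | .var x => .var x
  | .app none ts => mkApp aa (down aa (ts ⟨0, Nat.zero_lt_two⟩)) (down aa (ts ⟨1, Nat.one_lt_two⟩))
  | .app (some fi) ts => .app (some fi) (fun i => down aa (ts i))

def apps (u : ATerm C) (bs : List (ATerm C)) : ATerm C := bs.foldl appT u

def mkApps (aa : C → ℕ) (u : ATerm C) (bs : List (ATerm C)) : ATerm C :=
  bs.foldl (mkApp aa) u

lemma mkApp_var (aa : C → ℕ) (x : ℕ) (b : ATerm C) :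
    mkApp aa (.var x) b = appT (.var x) b := rfl

lemma mkApp_none (aa : C → ℕ) (ts : Fin 2 → ATerm C) (b : ATerm C) :
    mkApp aa (.app none ts) b = appT (.app none ts) b := rfl

lemma mkApp_some (aa : C → ℕ) (c : C) (i : ℕ) (us : Fin i → ATerm C) (b : ATerm C) :
    mkApp aa (.app (some (c, i)) us) b =
      if i < aa c then .app (some (c, i+1)) (ext us b)
      else appT (.app (some (c, i)) us) b := rfl

lemma down_var (aa : C → ℕ) (x : ℕ) : down aa (.var x) = .var x := rfl

lemma down_none (aa : C → ℕ) (ts : Fin 2 → ATerm C) :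
    down aa (.app none ts) =
      mkApp aa (down aa (ts ⟨0, Nat.zero_lt_two⟩)) (down aa (ts ⟨1, Nat.one_lt_two⟩)) := rfl

lemma down_some (aa : C → ℕ) (fi : C × ℕ) (ts : Fin fi.2 → ATerm C) :
    down aa (.app (some fi) ts) = .app (some fi) (fun i => down aa (ts i)) := by
  cases fi; rfl

/-! ### substitution basics -/

lemma subst_subst (t : ATerm C) (σ τ : ℕ → ATerm C) :
    (t.subst σ).subst τ = t.subst (fun x => (σ x).subst τ) := by
  induction t with
  | var x => rfl
  | app f ts ih => simp only [Term.subst]; exact congrArg _ (funext fun i => ih i)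

lemma subst_agree {t : ATerm C} {σ τ : ℕ → ATerm C}
    (h : ∀ y, Subterm (.var y) t → σ y = τ y) : t.subst σ = t.subst τ := by
  induction t with
  | var x => exact h x (Subterm.refl _)
  | app f ts ih =>
      simp only [Term.subst]
      exact congrArg _ (funext fun i => ih i (fun y hy => h y (Subterm.app f ts i _ hy)))

lemma appT_subst (a b : ATerm C) (σ : ℕ → ATerm C) :
    (appT a b).subst σ = appT (a.subst σ) (b.subst σ) := by
  simp only [appT, Term.subst]
  refine congrArg _ (funext fun k => ?_)
  rcases k with ⟨kv, hk⟩
  have hk2 : kv < 2 := hk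
  interval_cases kv <;> simp

lemma app_none_eq_appT (ts : Fin 2 → ATerm C) :
    Term.app none ts = appT (ts ⟨0, Nat.zero_lt_two⟩) (ts ⟨1, Nat.one_lt_two⟩) := by
  simp only [appT]
  refine congrArg _ (funext fun k => ?_)
  rcases k with ⟨kv, hk⟩
  have hk2 : kv < 2 := hk
  interval_cases kv <;> simp

lemma appT_inj {a b a' b' : ATerm C} (h : appT a b = appT a' b') : a = a' ∧ b = b' := by
  simp only [appT, Term.app.injEq, heq_eq_eq, true_and] at h
  exact ⟨congrFun h ⟨0, Nat.zero_lt_two⟩, congrFun h ⟨1, Nat.one_lt_two⟩⟩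

/-! ### subterm basics -/

lemma subterm_var {u : ATerm C} {x : ℕ} (h : Subterm u (.var x)) : u = .var x := by
  cases h; rfl

lemma subterm_app {u : ATerm C} {f : USig C} {ts : Fin (uar f) → ATerm C}
    (h : Subterm u (.app f ts)) : u = .app f ts ∨ ∃ i, Subterm u (ts i) := by
  cases h with
  | refl => exact Or.inl rfl
  | app _ _ i _ h => exact Or.inr ⟨i, h⟩

lemma Subterm.trans' {u v w : ATerm C} (h1 : Subterm u v) (h2 : Subterm v w) :
    Subterm u w := by
  induction h2 with
  | refl => exact h1
  | app f ts i v h ih => exact Subterm.app f ts i _ (ih h1)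

lemma subterm_appT {u a b : ATerm C} (h : Subterm u (appT a b)) :
    u = appT a b ∨ Subterm u a ∨ Subterm u b := by
  rcases subterm_app h with h | ⟨i, hi⟩
  · exact Or.inl h
  · rcases i with ⟨iv, hilt⟩
    have hilt2 : iv < 2 := hilt
    interval_cases iv
    · simp only [appT] at hi; exact Or.inr (Or.inl hi)
    · simp only [appT] at hi; exact Or.inr (Or.inr hi)

/-! ### fresh variables -/

def maxVar : ATerm C → ℕ
  | .var x => x
  | .app _ ts => Finset.univ.sup fun i => maxVar (ts i)

lemma le_maxVar_aux {u t : ATerm C} (h : Subterm u t) :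
    ∀ x : ℕ, u = .var x → x ≤ maxVar t := by
  induction h with
  | refl t => intro x hx; subst hx; exact le_rfl
  | app f ts i u h ih =>
      intro x hx
      exact le_trans (ih x hx)
        (Finset.le_sup (f := fun j => maxVar (ts j)) (Finset.mem_univ i))

lemma le_maxVar {x : ℕ} {t : ATerm C} (h : Subterm (.var x) t) : x ≤ maxVar t :=
  le_maxVar_aux h x rfl

/-! ### rewriting closure lemmas -/

lemma rew_mono {Q Q' : Set (ATerm C × ATerm C)} (h : Q ⊆ Q') {a b : ATerm C}
    (hr : Rew Q a b) : Rew Q' a b := by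
  induction hr with
  | rule l r σ hm => exact Rew.rule l r σ (h hm)
  | congr f ts i u _ ih => exact Rew.congr f ts i u ih

lemma rstar_mono {Q Q' : Set (ATerm C × ATerm C)} (h : Q ⊆ Q') {a b : ATerm C}
    (hr : RStar Q a b) : RStar Q' a b :=
  Relation.ReflTransGen.mono (fun _ _ => rew_mono h) _ _ hr

lemma rew_subst {Q : Set (ATerm C × ATerm C)} {a b : ATerm C} (τ : ℕ → ATerm C)
    (h : Rew Q a b) : Rew Q (a.subst τ) (b.subst τ) := by
  induction h with
  | rule l r σ hm =>
      rw [subst_subst, subst_subst]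
      exact Rew.rule l r _ hm
  | congr f ts i u _ ih =>
      have : (Term.app f (Function.update ts i u)).subst τ
          = Term.app f (Function.update (fun j => (ts j).subst τ) i (u.subst τ)) := by
        simp only [Term.subst]
        refine congrArg _ (funext fun j => ?_)
        by_cases hj : j = i
        · subst hj; simp
        · simp [Function.update_of_ne hj]
      rw [show (Term.app f ts).subst τ = Term.app f (fun j => (ts j).subst τ) from rfl, this]
      exact Rew.congr f _ i _ ih

lemma rstar_subst {Q : Set (ATerm C × ATerm C)} {a b : ATerm C} (τ : ℕ → ATerm C)
    (h : RStar Q a b) : RStar Q (a.subst τ) (b.subst τ) := by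
  induction h with
  | refl => exact Relation.ReflTransGen.refl
  | tail _ h ih => exact ih.tail (rew_subst τ h)

lemma rstar_congr {Q : Set (ATerm C × ATerm C)} {a b : ATerm C} (f : USig C)
    (ts : Fin (uar f) → ATerm C) (i : Fin (uar f)) (h : RStar Q a b) :
    RStar Q (.app f (Function.update ts i a)) (.app f (Function.update ts i b)) := by
  induction h with
  | refl => exact Relation.ReflTransGen.refl
  | @tail c d _ h ih =>
      refine ih.tail ?_
      have := Rew.congr f (Function.update ts i c) i d (by rwa [Function.update_self])
      rwa [Function.update_idem] at this


lemma rstar_app {Q : Set (ATerm C × ATerm C)} (f : USig C)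
    {ds es : Fin (uar f) → ATerm C} (h : ∀ i, RStar Q (ds i) (es i)) :
    RStar Q (.app f ds) (.app f es) := by
  have key : ∀ k : ℕ, k ≤ uar f →
      RStar Q (.app f ds) (.app f (fun j => if (j : ℕ) < k then es j else ds j)) := by
    intro k
    induction k with
    | zero =>
        intro _
        have : (fun j : Fin (uar f) => if (j : ℕ) < 0 then es j else ds j) = ds :=
          funext fun j => by simp
        rw [this]
        exact Relation.ReflTransGen.refl
    | succ k ih =>
        intro hk
        have hk' : k < uar f := hk
        refine (ih (le_of_lt hk')).trans ?_
        have h1 : (fun j : Fin (uar f) => if (j : ℕ) < k then es j else ds j)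
            = Function.update (fun j : Fin (uar f) => if (j : ℕ) < k then es j else ds j)
                ⟨k, hk'⟩ (ds ⟨k, hk'⟩) := by
          funext j
          by_cases hj : j = ⟨k, hk'⟩
          · subst hj; simp
          · rw [Function.update_of_ne hj]
        have h2 : (fun j : Fin (uar f) => if (j : ℕ) < k + 1 then es j else ds j)
            = Function.update (fun j : Fin (uar f) => if (j : ℕ) < k then es j else ds j)
                ⟨k, hk'⟩ (es ⟨k, hk'⟩) := by
          funext j
          by_cases hj : j = ⟨k, hk'⟩
          · subst hj; simp
          · rw [Function.update_of_ne hj]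
            have : (j : ℕ) ≠ k := fun hc => hj (Fin.ext hc)
            by_cases hjk : (j : ℕ) < k
            · rw [if_pos hjk, if_pos (Nat.lt_succ_of_lt hjk)]
            · rw [if_neg hjk, if_neg (by omega)]
        rw [h2]
        conv_lhs => rw [h1]
        exact rstar_congr f _ ⟨k, hk'⟩ (h _)
  have hfin := key (uar f) le_rfl
  have : (fun j : Fin (uar f) => if (j : ℕ) < uar f then es j else ds j) = es :=
    funext fun j => by simp [j.isLt]
  rwa [this] at hfin

lemma rstar_subst_point {Q : Set (ATerm C × ATerm C)} {σ τ : ℕ → ATerm C}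
    (h : ∀ x, RStar Q (σ x) (τ x)) (t : ATerm C) :
    RStar Q (t.subst σ) (t.subst τ) := by
  induction t with
  | var x => exact h x
  | app f ts ih =>
      show RStar Q (.app f fun i => (ts i).subst σ) (.app f fun i => (ts i).subst τ)
      exact rstar_app f fun i => ih i

lemma rew_appT_left {Q : Set (ATerm C × ATerm C)} {u v : ATerm C} (b : ATerm C)
    (h : Rew Q u v) : Rew Q (appT u b) (appT v b) := by
  have h0 : Rew Q ((fun k : Fin (uar (none : USig C)) => if (k : ℕ) = 0 then u else b)
      ⟨0, Nat.zero_lt_two⟩) v := by simpa using h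
  have := Rew.congr none (fun k : Fin (uar (none : USig C)) => if (k : ℕ) = 0 then u else b)
    ⟨0, Nat.zero_lt_two⟩ v h0
  have heq : Function.update
      (fun k : Fin (uar (none : USig C)) => if (k : ℕ) = 0 then u else b)
      ⟨0, Nat.zero_lt_two⟩ v
      = fun k : Fin (uar (none : USig C)) => if (k : ℕ) = 0 then v else b := by
    funext k
    rcases k with ⟨kv, hk⟩
    have hk2 : kv < 2 := hk
    interval_cases kv
    · simp
    · rw [Function.update_of_ne (by simp [Fin.ext_iff])]
      simp
  rw [heq] at this
  exact this

lemma rew_apps {Q : Set (ATerm C × ATerm C)} :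
    ∀ (bs : List (ATerm C)) {u v : ATerm C}, Rew Q u v →
      Rew Q (apps u bs) (apps v bs) := by
  intro bs
  induction bs with
  | nil => intro u v h; exact h
  | cons b bs ih => intro u v h; exact ih (rew_appT_left b h)

lemma rstar_apps {Q : Set (ATerm C × ATerm C)} (bs : List (ATerm C)) {u v : ATerm C}
    (h : RStar Q u v) : RStar Q (apps u bs) (apps v bs) := by
  induction h with
  | refl => exact Relation.ReflTransGen.refl
  | tail _ h ih => exact ih.tail (rew_apps bs h)

lemma step_mkApp (aa : C → ℕ) (a b : ATerm C) :
    RStar (USys aa) (appT a b) (mkApp aa a b) := by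
  match a with
  | .var x => rw [mkApp_var]; exact Relation.ReflTransGen.refl
  | .app none ts => erw [mkApp_none]; exact Relation.ReflTransGen.refl
  | .app (some (c, i)) us =>
      erw [mkApp_some]
      by_cases hic : i < aa c
      · rw [if_pos hic]
        refine Relation.ReflTransGen.single ?_
        have hmem : ((appT (fiT c i) (.var i), fiT c (i+1)) : ATerm C × ATerm C)
            ∈ USys aa := ⟨c, i, hic, rfl⟩
        have hstep := Rew.rule _ _ (fun m => if h : m < i then us ⟨m, h⟩ else b) hmem
        have h1 : (appT (fiT c i) (.var i)).subst (fun m => if h : m < i then us ⟨m, h⟩ else b)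
            = appT (.app (some (c, i)) us) b := by
          rw [appT_subst]
          congr 1
          · show Term.app (some (c, i)) (fun j : Fin i => if h : (j : ℕ) < i then us ⟨j, h⟩ else b)
              = _
            refine congrArg _ (funext fun j => ?_)
            rw [dif_pos j.isLt]; rfl
          · show (if h : i < i then us ⟨i, h⟩ else b) = b
            rw [dif_neg (lt_irrefl i)]
        have h2 : (fiT c (i+1)).subst (fun m => if h : m < i then us ⟨m, h⟩ else b)
            = Term.app (some (c, i+1)) (ext us b) := rfl
        rwa [h1, h2] at hstep
      · rw [if_neg hic]; exact Relation.ReflTransGen.refl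

lemma rstar_apps_mkApps (aa : C → ℕ) :
    ∀ (bs : List (ATerm C)) (u : ATerm C),
      RStar (USys aa) (apps u bs) (mkApps aa u bs) := by
  intro bs
  induction bs with
  | nil => intro u; exact Relation.ReflTransGen.refl
  | cons b bs ih =>
      intro u
      show RStar (USys aa) (apps (appT u b) bs) (mkApps aa (mkApp aa u b) bs)
      exact (rstar_apps bs (step_mkApp aa u b)).trans (ih (mkApp aa u b))

lemma mkApps_none_eq (aa : C → ℕ) :
    ∀ (bs : List (ATerm C)) (ts : Fin 2 → ATerm C),
      mkApps aa (.app none ts) bs = apps (.app none ts) bs := by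
  intro bs
  induction bs with
  | nil => intro ts; rfl
  | cons b bs ih =>
      intro ts
      show mkApps aa (mkApp aa (.app none ts) b) bs = apps (appT (.app none ts) b) bs
      erw [mkApp_none]
      exact ih _

lemma mkApps_some_ge (aa : C → ℕ) {c : C} {i : ℕ} (hic : ¬ i < aa c)
    (bs : List (ATerm C)) (us : Fin i → ATerm C) :
    mkApps aa (.app (some (c, i)) us) bs = apps (.app (some (c, i)) us) bs := by
  cases bs with
  | nil => rfl
  | cons b bs =>
      show mkApps aa (mkApp aa (.app (some (c, i)) us) b) bs
        = apps (appT (.app (some (c, i)) us) b) bs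
      erw [mkApp_some, if_neg hic]
      exact mkApps_none_eq aa bs _

lemma down_appT (aa : C → ℕ) (a b : ATerm C) :
    down aa (appT a b) = mkApp aa (down aa a) (down aa b) := by
  show mkApp aa (down aa (if (0 : ℕ) = 0 then a else b)) (down aa (if (1 : ℕ) = 0 then a else b))
    = _
  norm_num

/-! ### reduction to `down` and invariance -/

lemma rstar_down (aa : C → ℕ) (t : ATerm C) : RStar (USys aa) t (down aa t) := by
  induction t with
  | var x => exact Relation.ReflTransGen.refl
  | app f ts ih =>
      cases f with
      | none =>
          have h1 : RStar (USys aa) (.app none ts) (.app none (fun i => down aa (ts i))) :=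
            rstar_app none fun i => ih i
          have h2 : (Term.app none (fun i => down aa (ts i)) : ATerm C)
              = appT (down aa (ts ⟨0, Nat.zero_lt_two⟩)) (down aa (ts ⟨1, Nat.one_lt_two⟩)) :=
            app_none_eq_appT _
          erw [down_none]
          refine h1.trans ?_
          rw [h2]
          exact step_mkApp aa _ _
      | some fi =>
          erw [down_some]
          exact rstar_app _ fun i => ih i

lemma rew_inv {Q : Set (ATerm C × ATerm C)} {s u : ATerm C} (h : Rew Q s u) :
    (∃ l r σ, (l, r) ∈ Q ∧ s = l.subst σ ∧ u = r.subst σ) ∨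
    (∃ (f : USig C) (ts : Fin (uar f) → ATerm C) (i : Fin (uar f)) (v : ATerm C),
      Rew Q (ts i) v ∧ s = .app f ts ∧ u = .app f (Function.update ts i v)) := by
  cases h with
  | rule l r σ hm => exact Or.inl ⟨l, r, σ, hm, rfl, rfl⟩
  | congr f ts i v hv => exact Or.inr ⟨f, ts, i, v, hv, rfl, rfl⟩

lemma fiT_subst (c : C) (i : ℕ) (σ : ℕ → ATerm C) :
    (fiT c i).subst σ = Term.app (some (c, i)) (fun j : Fin i => σ (j : ℕ)) := rfl

lemma rew_down_eq {aa : C → ℕ} {s t : ATerm C} (h : Rew (USys aa) s t) :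
    down aa s = down aa t := by
  induction h with
  | rule l r σ hm =>
      obtain ⟨c, i, hic, heq⟩ := hm
      injection heq with e1 e2
      subst e1; subst e2
      rw [appT_subst, down_appT]
      show mkApp aa (down aa ((fiT c i).subst σ)) (down aa (σ i)) = _
      erw [fiT_subst, down_some, fiT_subst, down_some, mkApp_some, if_pos hic]
      refine congrArg _ (funext fun j => ?_)
      show ext (fun j : Fin i => down aa (σ (j : ℕ))) (down aa (σ i)) j = down aa (σ (j : ℕ))
      by_cases hj : (j : ℕ) < i
      · rw [ext, dif_pos hj]
      · rw [ext, dif_neg hj]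
        have : (j : ℕ) = i := by have := j.isLt; omega
        rw [this]
  | congr f ts i u hstep ih =>
      cases f with
      | none =>
          rcases i with ⟨iv, hiv⟩
          have hiv2 : iv < 2 := hiv
          erw [down_none, down_none]
          interval_cases iv
          · erw [show (Function.update ts ⟨0, hiv⟩ u) ⟨0, Nat.zero_lt_two⟩ = u from by simp,
              show (Function.update ts ⟨0, hiv⟩ u) ⟨1, Nat.one_lt_two⟩ = ts ⟨1, Nat.one_lt_two⟩
                from by rw [Function.update_of_ne (by simp [Fin.ext_iff])], ih]; rfl
          · erw [show (Function.update ts ⟨1, hiv⟩ u) ⟨0, Nat.zero_lt_two⟩ = ts ⟨0, Nat.zero_lt_two⟩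
                from by rw [Function.update_of_ne (by simp [Fin.ext_iff])],
              show (Function.update ts ⟨1, hiv⟩ u) ⟨1, Nat.one_lt_two⟩ = u from by simp, ih]; rfl
      | some fi =>
          erw [down_some, down_some]
          refine congrArg _ (funext fun j => ?_)
          by_cases hj : j = i
          · subst hj; simp [ih]
          · rw [Function.update_of_ne hj]

lemma rstar_down_eq {aa : C → ℕ} {s t : ATerm C} (h : RStar (USys aa) s t) :
    down aa s = down aa t := by
  induction h with
  | refl => rfl
  | tail _ h ih => exact ih.trans (rew_down_eq h)

/-! ### normal forms -/

lemma nf_child {Q : Set (ATerm C × ATerm C)} {f : USig C} {ts : Fin (uar f) → ATerm C}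
    (h : NF Q (.app f ts)) (i : Fin (uar f)) : NF Q (ts i) :=
  fun u hu => h _ (Rew.congr f ts i u hu)

lemma nf_appT (aa : C → ℕ) {a b : ATerm C} (ha : NF (USys aa) a) (hb : NF (USys aa) b)
    (hroot : ∀ (c : C) (i : ℕ) (us : Fin i → ATerm C),
      a = .app (some (c, i)) us → ¬ i < aa c) :
    NF (USys aa) (appT a b) := by
  intro u hu
  rcases rew_inv hu with ⟨l, r, σ, hm, hs, _⟩ | ⟨f, ts, i, v, hv, hs, _⟩
  · obtain ⟨c, i, hic, heq⟩ := hm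
    injection heq with e1 e2
    subst e1
    rw [appT_subst] at hs
    have h2 := (appT_inj hs).1
    rw [fiT_subst] at h2
    exact hroot c i _ h2 hic
  · simp only [appT] at hs
    injection hs with e1 e2
    subst e1
    have e3 := eq_of_heq e2
    subst e3
    rcases i with ⟨iv, hiv⟩
    have hiv2 : iv < 2 := hiv
    interval_cases iv
    · exact ha v (by simpa using hv)
    · exact hb v (by simpa using hv)

lemma nf_app_some (aa : C → ℕ) {fi : C × ℕ} {ts : Fin (uar (some fi)) → ATerm C}
    (h : ∀ j, NF (USys aa) (ts j)) : NF (USys aa) (.app (some fi) ts) := by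
  intro u hu
  rcases rew_inv hu with ⟨l, r, σ, hm, hs, _⟩ | ⟨f, ts', i, v, hv, hs, _⟩
  · obtain ⟨c, i, hic, heq⟩ := hm
    injection heq with e1 e2
    subst e1
    rw [appT_subst] at hs
    simp only [appT] at hs
    injection hs with e1 _
    exact (by cases e1)
  · injection hs with e1 e2
    subst e1
    have e3 := eq_of_heq e2
    subst e3
    exact h i v hv

lemma nf_mkApp (aa : C → ℕ) {a b : ATerm C} (ha : NF (USys aa) a) (hb : NF (USys aa) b) :
    NF (USys aa) (mkApp aa a b) := by
  match a with
  | .var x =>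
      rw [mkApp_var]
      refine nf_appT aa ha hb ?_
      intro c i us hc
      exact (by cases hc)
  | .app none g =>
      erw [mkApp_none]
      refine nf_appT aa ha hb ?_
      intro c i us hc
      injection hc with e1 _
      exact (by cases e1)
  | .app (some (c, i)) us =>
      erw [mkApp_some]
      by_cases hic : i < aa c
      · rw [if_pos hic]
        refine nf_app_some aa ?_
        intro j
        show NF (USys aa) (ext us b j)
        unfold ext
        split
        · exact nf_child ha _
        · exact hb
      · rw [if_neg hic]
        refine nf_appT aa ha hb ?_
        intro c' i' us' hc
        injection hc with e1 _
        injection e1 with e2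
        injection e2 with ec ei
        subst ec; subst ei
        exact hic

lemma nf_down (aa : C → ℕ) (t : ATerm C) : NF (USys aa) (down aa t) := by
  induction t with
  | var x =>
      intro u hu
      rcases rew_inv hu with ⟨l, r, σ, hm, hs, _⟩ | ⟨f, ts, i, v, hv, hs, _⟩
      · obtain ⟨c, i, hic, heq⟩ := hm
        injection heq with e1 _
        subst e1
        rw [appT_subst] at hs
        simp only [appT] at hs
        exact (by cases hs)
      · exact (by cases hs)
  | app f ts ih =>
      cases f with
      | none => erw [down_none]; exact nf_mkApp aa (ih _) (ih _)
      | some fi => erw [down_some]; exact nf_app_some aa fun j => ih j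

lemma down_eq_of_nf {aa : C → ℕ} {t : ATerm C} (h : NF (USys aa) t) : down aa t = t := by
  induction t with
  | var x => rfl
  | app f ts ih =>
      cases f with
      | none =>
          erw [down_none, ih _ (nf_child h _), ih _ (nf_child h _)]
          match hts : ts ⟨0, Nat.zero_lt_two⟩ with
          | .var x => erw [mkApp_var, ← hts, ← app_none_eq_appT]
          | .app none g => erw [mkApp_none, ← hts, ← app_none_eq_appT]
          | .app (some (c, i)) us =>
              erw [mkApp_some]
              by_cases hic : i < aa c
              · exfalso
                have hmem : ((appT (fiT c i) (.var i), fiT c (i+1)) : ATerm C × ATerm C)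
                    ∈ USys aa := ⟨c, i, hic, rfl⟩
                have hstep := Rew.rule _ _
                  (fun m => if hm : m < i then us ⟨m, hm⟩ else ts ⟨1, Nat.one_lt_two⟩) hmem
                have h1 : (appT (fiT c i) (.var i)).subst
                    (fun m => if hm : m < i then us ⟨m, hm⟩ else ts ⟨1, Nat.one_lt_two⟩)
                    = .app none ts := by
                  rw [appT_subst]
                  erw [app_none_eq_appT ts, hts]
                  congr 1
                  · rw [fiT_subst]
                    refine congrArg _ (funext fun j => ?_)
                    show (if hm : (j : ℕ) < i then us ⟨(j : ℕ), hm⟩ else _) = us j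
                    rw [dif_pos j.isLt]; rfl
                  · show (if hm : i < i then us ⟨i, hm⟩ else ts ⟨1, Nat.one_lt_two⟩) = _
                    rw [dif_neg (lt_irrefl i)]; rfl
                rw [h1] at hstep
                exact h _ hstep
              · erw [if_neg hic, ← hts, ← app_none_eq_appT]
      | some fi =>
          erw [down_some]
          exact congrArg _ (funext fun j => ih j (nf_child h j))

/-! ### applicative / head-variable-free structure -/

lemma applicative_sub {t u : ATerm C} (h : ApplicativeT t) (hs : Subterm u t) :
    ApplicativeT u := fun u' f' ts' hs' he' => h u' f' ts' (Subterm.trans' hs' hs) he'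

lemma applicative_child {f : USig C} {ts : Fin (uar f) → ATerm C}
    (h : ApplicativeT (.app f ts)) (i : Fin (uar f)) : ApplicativeT (ts i) :=
  applicative_sub h (Subterm.app f ts i _ (Subterm.refl _))

lemma hvf_sub {t u : ATerm C} (h : HeadVarFree t) (hs : Subterm u t) :
    HeadVarFree u := fun u' hs' x v => h u' (Subterm.trans' hs' hs) x v

lemma hvf_child {f : USig C} {ts : Fin (uar f) → ATerm C}
    (h : HeadVarFree (.app f ts)) (i : Fin (uar f)) : HeadVarFree (ts i) :=
  hvf_sub h (Subterm.app f ts i _ (Subterm.refl _))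

lemma appT_eq_app (a b : ATerm C) :
    appT a b = Term.app (none : USig C) (fun k => if (k : ℕ) = 0 then a else b) := rfl

/-! ### substitution commutes with `down` on head-variable-free terms -/

lemma mkApp_ne_var (aa : C → ℕ) (a b : ATerm C) (y : ℕ) : mkApp aa a b ≠ .var y := by
  match a with
  | .var x => rw [mkApp_var]; exact fun h => (by cases h)
  | .app none g => erw [mkApp_none]; exact fun h => (by cases h)
  | .app (some (c, i)) us =>
      erw [mkApp_some]
      by_cases hic : i < aa c
      · rw [if_pos hic]; exact fun h => (by cases h)
      · rw [if_neg hic]; exact fun h => (by cases h)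

lemma down_var_inv {aa : C → ℕ} {t : ATerm C} {y : ℕ} (h : down aa t = .var y) :
    t = .var y := by
  match t with
  | .var x => rw [down_var] at h; exact h
  | .app none ts => erw [down_none] at h; exact absurd h (mkApp_ne_var aa _ _ y)
  | .app (some fi) ts => erw [down_some] at h; exact (by cases h)

lemma mkApp_subst_some (aa : C → ℕ) (c : C) (i : ℕ) (us : Fin i → ATerm C)
    (b : ATerm C) (τ : ℕ → ATerm C) :
    (mkApp aa (.app (some (c, i)) us) b).subst τ
      = mkApp aa (.app (some (c, i)) (fun j => (us j).subst τ)) (b.subst τ) := by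
  erw [mkApp_some, mkApp_some]
  by_cases hic : i < aa c
  · rw [if_pos hic, if_pos hic]
    show Term.app (some (c, i+1)) (fun j => (ext us b j).subst τ)
      = .app (some (c, i+1)) (ext (fun j => (us j).subst τ) (b.subst τ))
    refine congrArg _ (funext fun j => ?_)
    unfold ext
    by_cases hj : (j : ℕ) < i
    · rw [dif_pos hj, dif_pos hj]
    · rw [dif_neg hj, dif_neg hj]
  · rw [if_neg hic, if_neg hic, appT_subst]
    rfl

lemma down_subst (aa : C → ℕ) :
    ∀ (t : ATerm C), HeadVarFree t → ∀ σ : ℕ → ATerm C,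
      down aa (t.subst σ) = (down aa t).subst (fun x => down aa (σ x)) := by
  intro t
  induction t with
  | var x => intro _ σ; rfl
  | app f ts ih =>
      intro hvf σ
      cases f with
      | some fi =>
          show down aa (.app (some fi) fun i => (ts i).subst σ)
            = (down aa (.app (some fi) ts)).subst _
          erw [down_some, down_some]
          show Term.app (some fi) (fun j => down aa ((ts j).subst σ)) = _
          exact congrArg _ (funext fun j => ih j (hvf_child hvf j) σ)
      | none =>
          have h0 : ∀ x : ℕ, ts ⟨0, Nat.zero_lt_two⟩ ≠ .var x := by
            intro x hx
            exact hvf _ (Subterm.refl _) x (ts ⟨1, Nat.one_lt_two⟩)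
              (by erw [app_none_eq_appT ts, hx]; rfl)
          show down aa (.app none fun i => (ts i).subst σ)
            = (down aa (.app none ts)).subst _
          erw [down_none, down_none]
          show mkApp aa (down aa ((ts ⟨0, Nat.zero_lt_two⟩).subst σ))
              (down aa ((ts ⟨1, Nat.one_lt_two⟩).subst σ)) = _
          rw [ih _ (hvf_child hvf _) σ, ih _ (hvf_child hvf _) σ]
          match hdt : down aa (ts ⟨0, Nat.zero_lt_two⟩) with
          | .var y => exact absurd (down_var_inv hdt) (h0 y)
          | .app none g =>
              erw [mkApp_none]
              show mkApp aa (.app none fun j => (g j).subst _) _ = _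
              erw [mkApp_none, appT_subst]
              rfl
          | .app (some (c1, i1)) us1 =>
              exact (mkApp_subst_some aa c1 i1 us1 _ _).symm

/-! ### head symbol of the normal form determines the head count -/

lemma headCount_down (aa : C → ℕ) :
    ∀ (t : ATerm C), ApplicativeT t → ∀ (c : C) (i : ℕ)
      (us : Fin (uar (some (c, i))) → ATerm C),
      down aa t = .app (some (c, i)) us → headCount t = some (c, i) := by
  intro t
  induction t with
  | var x => intro _ c i us h; rw [down_var] at h; exact (by cases h)
  | app f ts ih =>
      intro hap c i us h
      cases f with
      | some fi =>
          obtain ⟨c0, i0⟩ := fi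
          have hsym : ApplicativeSym (some (c0, i0)) := hap _ _ _ (Subterm.refl _) rfl
          have hi0 : i0 = 0 := hsym
          subst hi0
          erw [down_some] at h
          injection h with e1 _

      | none =>
          erw [down_none] at h
          match hdt : down aa (ts ⟨0, Nat.zero_lt_two⟩) with
          | .var y =>
              erw [hdt, mkApp_var] at h
              rw [appT_eq_app] at h
              injection h with e1 _
              exact (by cases e1)
          | .app none g =>
              erw [hdt, mkApp_none] at h
              rw [appT_eq_app] at h
              injection h with e1 _
              exact (by cases e1)
          | .app (some (c1, i1)) us1 =>
              erw [hdt, mkApp_some] at h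
              by_cases hic : i1 < aa c1
              · rw [if_pos hic] at h
                injection h with e1 _
                injection e1 with e2
                injection e2 with ec ei
                subst ec
                have hhc := ih ⟨0, Nat.zero_lt_two⟩
                  (applicative_child hap ⟨0, Nat.zero_lt_two⟩) c1 i1 us1 hdt
                have hunf : headCount (Term.app (none : USig C) ts)
                    = (headCount (ts ⟨0, Nat.zero_lt_two⟩)).map (fun p => (p.1, p.2 + 1)) := rfl
                rw [hunf, hhc, ← ei]
                rfl
              · rw [if_neg hic] at h
                rw [appT_eq_app] at h
                injection h with e1 _
                exact (by cases e1)

/-! ### facts about η-saturated rules -/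

lemma eta_facts {R : Set (ATerm C × ATerm C)} {aa : C → ℕ} (hR : IsATRS R) (hl : LHVF R)
    {p : ATerm C × ATerm C} (h : Eta aa R p) :
    HeadVarFree p.1 ∧ (∀ x : ℕ, p.1 ≠ .var x) ∧ ApplicativeT p.1 ∧ ApplicativeT p.2 := by
  induction h with
  | base p hp =>
      obtain ⟨hnv, _, ha1, ha2⟩ := hR p hp
      exact ⟨hl p hp, hnv, ha1, ha2⟩
  | eta l r c n x hEta hc hn hxl hxr ih =>
      obtain ⟨ihvf, ihnv, ihal, ihar⟩ := ih
      refine ⟨?_, ?_, ?_, ?_⟩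
      · intro u hs y v he
        rcases subterm_appT hs with h1 | h1 | h1
        · subst h1
          exact ihnv y (appT_inj he).1
        · exact ihvf u h1 y v he
        · rw [subterm_var h1] at he
          exact (by cases he)
      · intro y hy
        rw [appT_eq_app] at hy
        exact (by cases hy)
      · intro u f' ts' hs he
        rcases subterm_appT hs with h1 | h1 | h1
        · subst h1
          rw [appT_eq_app] at he
          injection he with e1 _
          rw [← e1]
          trivial
        · exact ihal u f' ts' h1 he
        · rw [subterm_var h1] at he
          exact (by cases he)
      · intro u f' ts' hs he
        rcases subterm_appT hs with h1 | h1 | h1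
        · subst h1
          rw [appT_eq_app] at he
          injection he with e1 _
          rw [← e1]
          trivial
        · exact ihar u f' ts' h1 he
        · rw [subterm_var h1] at he
          exact (by cases he)

/-! ### congruence through `mkApps` -/

lemma congr_mkApps {Q : Set (ATerm C × ATerm C)} (aa : C → ℕ) :
    ∀ (bs : List (ATerm C)) (f : USig C) (ts : Fin (uar f) → ATerm C)
      (i : Fin (uar f)) (u : ATerm C), Rew Q (ts i) u →
      Rew Q (mkApps aa (.app f ts) bs) (mkApps aa (.app f (Function.update ts i u)) bs) := by
  intro bs
  induction bs with
  | nil => intro f ts i u h; exact Rew.congr f ts i u h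
  | cons b bs ih =>
      intro f ts i u h
      show Rew Q (mkApps aa (mkApp aa (.app f ts) b) bs)
        (mkApps aa (mkApp aa (.app f (Function.update ts i u)) b) bs)
      have hAux : ∀ (X Y : ATerm C), Rew Q X Y →
          Rew Q (mkApps aa (appT X b) bs) (mkApps aa (appT Y b) bs) := by
        intro X Y hXY
        rw [appT_eq_app, appT_eq_app]
        have harg : Rew Q ((fun k : Fin (uar (none : USig C)) =>
            if (k : ℕ) = 0 then X else b) ⟨0, Nat.zero_lt_two⟩) Y := by simpa using hXY
        have hgoal := ih none (fun k : Fin (uar (none : USig C)) =>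
          if (k : ℕ) = 0 then X else b) ⟨0, Nat.zero_lt_two⟩ Y harg
        have heq : Function.update (fun k : Fin (uar (none : USig C)) =>
            if (k : ℕ) = 0 then X else b) ⟨0, Nat.zero_lt_two⟩ Y
            = fun k : Fin (uar (none : USig C)) => if (k : ℕ) = 0 then Y else b := by
          funext k
          rcases k with ⟨kv, hk⟩
          have hk2 : kv < 2 := hk
          interval_cases kv
          · simp
          · rw [Function.update_of_ne (by simp [Fin.ext_iff])]
            simp
        erw [heq] at hgoal
        exact hgoal
      cases f with
      | none =>
          erw [mkApp_none, mkApp_none]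
          exact hAux _ _ (Rew.congr none ts i u h)
      | some fi =>
          obtain ⟨c, j⟩ := fi
          by_cases hic : j < aa c
          · erw [mkApp_some, mkApp_some, if_pos hic, if_pos hic]
            have hlt : (i : ℕ) < j + 1 := Nat.lt_succ_of_lt i.isLt
            have harg : Rew Q (ext ts b ⟨(i : ℕ), hlt⟩) u := by
              show Rew Q (if h : (i : ℕ) < j then ts ⟨(i : ℕ), h⟩ else b) u
              rw [dif_pos (show (i : ℕ) < j from i.isLt)]
              simpa using h
            have hgoal := ih (some (c, j + 1)) (ext ts b) ⟨(i : ℕ), hlt⟩ u harg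
            have heq : Function.update (ext ts b) ⟨(i : ℕ), hlt⟩ u
                = ext (Function.update ts i u) b := by
              funext k
              by_cases hk : k = ⟨(i : ℕ), hlt⟩
              · subst hk
                rw [Function.update_self]
                show u = if h : (i : ℕ) < j then Function.update ts i u ⟨(i : ℕ), h⟩ else b
                rw [dif_pos (show (i : ℕ) < j from i.isLt)]
                have : (⟨(i : ℕ), i.isLt⟩ : Fin (uar (some (c, j)))) = i := by
                  exact Fin.ext rfl
                rw [this, Function.update_self]
              · rw [Function.update_of_ne hk]
                show (if h : (k : ℕ) < j then ts ⟨(k : ℕ), h⟩ else b)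
                  = if h : (k : ℕ) < j then Function.update ts i u ⟨(k : ℕ), h⟩ else b
                by_cases hkj : (k : ℕ) < j
                · rw [dif_pos hkj, dif_pos hkj]
                  have hne : (⟨(k : ℕ), hkj⟩ : Fin (uar (some (c, j)))) ≠ i := by
                    intro hc
                    apply hk
                    apply Fin.ext
                    have := congrArg (fun z : Fin (uar (some (c, j))) => (z : ℕ)) hc
                    simpa using this
                  rw [Function.update_of_ne hne]
                · rw [dif_neg hkj, dif_neg hkj]
            erw [heq] at hgoal
            exact hgoal
          · erw [mkApp_some, mkApp_some, if_neg hic, if_neg hic]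
            exact hAux _ _ (Rew.congr _ ts i u h)

lemma rew_appT_right_mkApps {Q : Set (ATerm C × ATerm C)} (aa : C → ℕ) (X : ATerm C)
    {b b' : ATerm C} (bs : List (ATerm C)) (h : Rew Q b b') :
    Rew Q (mkApps aa (appT X b) bs) (mkApps aa (appT X b') bs) := by
  rw [appT_eq_app, appT_eq_app]
  have harg : Rew Q ((fun k : Fin (uar (none : USig C)) =>
      if (k : ℕ) = 0 then X else b) ⟨1, Nat.one_lt_two⟩) b' := by simpa using h
  have hgoal := congr_mkApps aa bs none (fun k : Fin (uar (none : USig C)) =>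
    if (k : ℕ) = 0 then X else b) ⟨1, Nat.one_lt_two⟩ b' harg
  have heq : Function.update (fun k : Fin (uar (none : USig C)) =>
      if (k : ℕ) = 0 then X else b) ⟨1, Nat.one_lt_two⟩ b'
      = fun k : Fin (uar (none : USig C)) => if (k : ℕ) = 0 then X else b' := by
    funext k
    rcases k with ⟨kv, hk⟩
    have hk2 : kv < 2 := hk
    interval_cases kv
    · rw [Function.update_of_ne (by simp [Fin.ext_iff])]
      simp
    · simp
  rw [heq] at hgoal
  exact hgoal

lemma rew_mkApp_right {Q : Set (ATerm C × ATerm C)} (aa : C → ℕ) (a : ATerm C)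
    {b b' : ATerm C} (bs : List (ATerm C)) (h : Rew Q b b') :
    Rew Q (mkApps aa (mkApp aa a b) bs) (mkApps aa (mkApp aa a b') bs) := by
  match a with
  | .var x =>
      rw [mkApp_var, mkApp_var]
      exact rew_appT_right_mkApps aa _ bs h
  | .app none g =>
      erw [mkApp_none, mkApp_none]
      exact rew_appT_right_mkApps aa _ bs h
  | .app (some (c, j)) us =>
      erw [mkApp_some, mkApp_some]
      by_cases hic : j < aa c
      · rw [if_pos hic, if_pos hic]
        have hjlt : j < j + 1 := Nat.lt_succ_self j
        have harg : Rew Q (ext us b ⟨j, hjlt⟩) b' := by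
          show Rew Q (if h : j < j then us ⟨j, h⟩ else b) b'
          rw [dif_neg (lt_irrefl j)]
          exact h
        have hgoal := congr_mkApps aa bs (some (c, j + 1)) (ext us b) ⟨j, hjlt⟩ b' harg
        have heq : Function.update (ext us b) ⟨j, hjlt⟩ b' = ext us b' := by
          funext k
          by_cases hk : k = ⟨j, hjlt⟩
          · subst hk
            rw [Function.update_self]
            show b' = if h : j < j then us ⟨j, h⟩ else b'
            rw [dif_neg (lt_irrefl j)]
          · rw [Function.update_of_ne hk]
            show (if h : (k : ℕ) < j then us ⟨(k : ℕ), h⟩ else b)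
              = if h : (k : ℕ) < j then us ⟨(k : ℕ), h⟩ else b'
            have hkj : (k : ℕ) < j := by
              have h1 : (k : ℕ) < j + 1 := k.isLt
              have h2 : (k : ℕ) ≠ j := by
                intro hc
                exact hk (Fin.ext hc)
              omega
            rw [dif_pos hkj, dif_pos hkj]
        erw [heq] at hgoal
        exact hgoal
      · rw [if_neg hic, if_neg hic]
        exact rew_appT_right_mkApps aa _ bs h

lemma tg_mkApp_right {Q : Set (ATerm C × ATerm C)} (aa : C → ℕ) (a : ATerm C)
    (bs : List (ATerm C)) {b b' : ATerm C} (h : Relation.TransGen (Rew Q) b b') :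
    Relation.TransGen (Rew Q) (mkApps aa (mkApp aa a b) bs)
      (mkApps aa (mkApp aa a b') bs) :=
  Relation.TransGen.lift (fun x => mkApps aa (mkApp aa a x) bs)
    (fun _ _ hxy => rew_mkApp_right aa a bs hxy) _ _ h

/-! ### simulation of a rule step -/

lemma usys_subset_ud {R : Set (ATerm C × ATerm C)} {aa : C → ℕ} :
    USys aa ⊆ UD aa R := fun _ hp => Or.inr hp

lemma rule_step {R : Set (ATerm C × ATerm C)} {aa : C → ℕ} (hR : IsATRS R) (hl : LHVF R)
    (l r : ATerm C) (σ : ℕ → ATerm C) (hEta : Eta aa R (l, r)) (bs : List (ATerm C))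
    (hEq : mkApps aa (down aa (l.subst σ)) bs = apps (down aa (l.subst σ)) bs) :
    Relation.TransGen (Rew (UD aa R))
      (mkApps aa (down aa (l.subst σ)) bs) (mkApps aa (down aa (r.subst σ)) bs) := by
  obtain ⟨hvf, hnv, _, _⟩ := eta_facts hR hl hEta
  have hdl : down aa (l.subst σ) = (down aa l).subst (fun x => down aa (σ x)) :=
    down_subst aa l hvf σ
  have hmem : ((down aa l, down aa r) : ATerm C × ATerm C) ∈ UD aa R :=
    Or.inl ⟨l, r, hEta, ⟨rstar_down aa l, nf_down aa l⟩, ⟨rstar_down aa r, nf_down aa r⟩⟩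
  have hstep : Rew (UD aa R) (down aa (l.subst σ))
      ((down aa r).subst (fun x => down aa (σ x))) := by
    rw [hdl]
    exact Rew.rule _ _ _ hmem
  have h1 : Rew (UD aa R) (apps (down aa (l.subst σ)) bs)
      (apps ((down aa r).subst (fun x => down aa (σ x))) bs) := rew_apps bs hstep
  have h2 : RStar (USys aa) (r.subst σ) ((down aa r).subst (fun x => down aa (σ x))) :=
    (rstar_subst σ (rstar_down aa r)).trans
      (rstar_subst_point (fun x => rstar_down aa (σ x)) (down aa r))
  have h3 : down aa ((down aa r).subst (fun x => down aa (σ x))) = down aa (r.subst σ) :=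
    (rstar_down_eq h2).symm
  have h4 : RStar (USys aa) ((down aa r).subst (fun x => down aa (σ x)))
      (down aa (r.subst σ)) := by
    have := rstar_down aa ((down aa r).subst (fun x => down aa (σ x)))
    rwa [h3] at this
  have h5 : RStar (USys aa) (apps ((down aa r).subst (fun x => down aa (σ x))) bs)
      (mkApps aa (down aa (r.subst σ)) bs) :=
    (rstar_apps bs h4).trans (rstar_apps_mkApps aa bs _)
  rw [hEq]
  exact Relation.TransGen.head' h1 (rstar_mono usys_subset_ud h5)

lemma rule_sim {R : Set (ATerm C × ATerm C)} {aa : C → ℕ} (hR : IsATRS R) (hl : LHVF R) :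
    ∀ (bs : List (ATerm C)), (∀ b ∈ bs, NF (USys aa) b) →
      ∀ (l r : ATerm C) (σ : ℕ → ATerm C), Eta aa R (l, r) →
      Relation.TransGen (Rew (UD aa R))
        (mkApps aa (down aa (l.subst σ)) bs) (mkApps aa (down aa (r.subst σ)) bs) := by
  intro bs
  induction bs with
  | nil => intro _ l r σ hEta; exact rule_step hR hl l r σ hEta [] rfl
  | cons b bs ih =>
      intro hnf l r σ hEta
      obtain ⟨hvf, hnv, hal, har⟩ := eta_facts hR hl hEta
      have hdl : down aa (l.subst σ) = (down aa l).subst (fun x => down aa (σ x)) :=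
        down_subst aa l hvf σ
      match hdlshape : down aa l with
      | .var y => exact absurd (down_var_inv hdlshape) (hnv y)
      | .app none g =>
          refine rule_step hR hl l r σ hEta (b :: bs) ?_
          rw [hdl, hdlshape]
          show mkApps aa (.app none fun j => (g j).subst _) (b :: bs)
            = apps (.app none fun j => (g j).subst _) (b :: bs)
          exact mkApps_none_eq aa _ _
      | .app (some (c1, i1)) us1 =>
          by_cases hic : i1 < aa c1
          · have hhc : headCount l = some (c1, i1) :=
              headCount_down aa l hal c1 i1 us1 hdlshape
            set x := max (maxVar l) (maxVar r) + 1 with hxdef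
            have hxl : ¬ Subterm (.var x) l := by
              intro hc
              have := le_maxVar hc
              omega
            have hxr : ¬ Subterm (.var x) r := by
              intro hc
              have := le_maxVar hc
              omega
            have hEta' : Eta aa R (appT l (.var x), appT r (.var x)) :=
              Eta.eta l r c1 i1 x hEta hhc hic hxl hxr
            have hb : down aa b = b := down_eq_of_nf (hnf b List.mem_cons_self)
            have hls : (appT l (.var x)).subst (Function.update σ x b)
                = appT (l.subst σ) b := by
              rw [appT_subst]
              congr 1
              · refine subst_agree fun y hy => ?_
                have hyx : y ≠ x := fun he => hxl (by rw [← he]; exact hy)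
                exact Function.update_of_ne hyx _ _
              · show Function.update σ x b x = b
                rw [Function.update_self]
            have hrs : (appT r (.var x)).subst (Function.update σ x b)
                = appT (r.subst σ) b := by
              rw [appT_subst]
              congr 1
              · refine subst_agree fun y hy => ?_
                have hyx : y ≠ x := fun he => hxr (by rw [← he]; exact hy)
                exact Function.update_of_ne hyx _ _
              · show Function.update σ x b x = b
                rw [Function.update_self]
            have hkey := ih (fun b' hb' => hnf b' (List.mem_cons_of_mem _ hb'))
              (appT l (.var x)) (appT r (.var x)) (Function.update σ x b) hEta'
            rw [hls, hrs, down_appT, down_appT, hb] at hkey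
            exact hkey
          · refine rule_step hR hl l r σ hEta (b :: bs) ?_
            rw [hdl, hdlshape]
            show mkApps aa (.app (some (c1, i1)) fun j => (us1 j).subst _) (b :: bs)
              = apps (.app (some (c1, i1)) fun j => (us1 j).subst _) (b :: bs)
            exact mkApps_some_ge aa hic _ _

/-! ### main simulation lemma -/

lemma main_sim {R : Set (ATerm C × ATerm C)} {aa : C → ℕ} (hR : IsATRS R) (hl : LHVF R)
    {s t : ATerm C} (hst : Rew R s t) :
    ApplicativeT s → ∀ bs : List (ATerm C), (∀ b ∈ bs, NF (USys aa) b) →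
      Relation.TransGen (Rew (UD aa R))
        (mkApps aa (down aa s) bs) (mkApps aa (down aa t) bs) := by
  induction hst with
  | rule l r σ hmem =>
      intro _ bs hbs
      exact rule_sim hR hl bs hbs l r σ (Eta.base _ hmem)
  | congr f ts i u hstep ih =>
      intro hsa bs hbs
      cases f with
      | some fi =>
          obtain ⟨c0, i0⟩ := fi
          have h0 : ApplicativeSym (some (c0, i0)) := hsa _ _ _ (Subterm.refl _) rfl
          have hi0 : i0 = 0 := h0
          subst hi0
          exact absurd i.isLt (Nat.not_lt_zero _)
      | none =>
          rcases i with ⟨iv, hiv⟩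
          have hiv2 : iv < 2 := hiv
          interval_cases iv
          · have e0 : (⟨0, hiv⟩ : Fin (uar (none : USig C))) = ⟨0, Nat.zero_lt_two⟩ := rfl
            have hts0 : ApplicativeT (ts ⟨0, Nat.zero_lt_two⟩) := applicative_child hsa _
            have hkey := ih hts0 (down aa (ts ⟨1, Nat.one_lt_two⟩) :: bs) ?_
            · erw [down_none, down_none, e0,
                show Function.update ts (⟨0, Nat.zero_lt_two⟩ : Fin (uar (none : USig C))) u
                  ⟨0, Nat.zero_lt_two⟩ = u from by rw [Function.update_self],
                show Function.update ts (⟨0, Nat.zero_lt_two⟩ : Fin (uar (none : USig C))) u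
                  ⟨1, Nat.one_lt_two⟩ = ts ⟨1, Nat.one_lt_two⟩ from by
                    rw [Function.update_of_ne (by simp [Fin.ext_iff])]]
              exact hkey
            · intro b' hb'
              rcases List.mem_cons.mp hb' with h1 | h1
              · rw [h1]; exact nf_down aa _
              · exact hbs b' h1
          · have e1 : (⟨1, hiv⟩ : Fin (uar (none : USig C))) = ⟨1, Nat.one_lt_two⟩ := rfl
            have hts1 : ApplicativeT (ts ⟨1, Nat.one_lt_two⟩) := applicative_child hsa _
            have hkey := ih hts1 [] (by intro b hb; cases hb)
            have hkey' : Relation.TransGen (Rew (UD aa R))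
                (down aa (ts ⟨1, Nat.one_lt_two⟩)) (down aa u) := hkey
            erw [down_none, down_none, e1,
              show Function.update ts (⟨1, Nat.one_lt_two⟩ : Fin (uar (none : USig C))) u
                ⟨0, Nat.zero_lt_two⟩ = ts ⟨0, Nat.zero_lt_two⟩ from by
                  rw [Function.update_of_ne (by simp [Fin.ext_iff])],
              show Function.update ts (⟨1, Nat.one_lt_two⟩ : Fin (uar (none : USig C))) u
                ⟨1, Nat.one_lt_two⟩ = u from by rw [Function.update_self]]
            exact tg_mkApp_right aa _ bs hkey'

end UncurrySim

/-- a single `R`-step between applicative terms is simulated by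
at least one `U↓(R)`-step on the `U`-normal forms:
`s →_R t` implies `s↓_U →⁺_{U↓(R)} t↓_U`. -/
theorem uncurried_step {C : Type} (R : Set (ATerm C × ATerm C)) (aa : C → ℕ)
    (hR : IsATRS R) (hl : LHVF R) (haa : AASpec R aa)
    (s t s' t' : ATerm C) (hsa : ApplicativeT s)
    (hst : Rew R s t)
    (hs : NormTo (USys aa) s s') (ht : NormTo (USys aa) t t') :
    Relation.TransGen (Rew (UD aa R)) s' t' := by
  have hs' : s' = UncurrySim.down aa s := by
    have h1 := UncurrySim.rstar_down_eq hs.1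
    have h2 := UncurrySim.down_eq_of_nf hs.2
    rw [← h2, ← h1]
  have ht' : t' = UncurrySim.down aa t := by
    have h1 := UncurrySim.rstar_down_eq ht.1
    have h2 := UncurrySim.down_eq_of_nf ht.2
    rw [← h2, ← h1]
  rw [hs', ht']
  exact UncurrySim.main_sim hR hl hst hsa [] (by intro b hb; cases hb)
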